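/- Define L : ℕ → ℕ by L(1) = 1 and L(K+1) = (K choose (K-1)) · L(K) + 2 · ∑_{i=0}^{K-2} (K choose i) · L(i+1) · L(K-i) for K ≥ 1, and let B : ℕ → ℕ satisfy B(1) = B(2) = 1 and B(K+1) = (2K-1)·B(K). Then for all K ≥ 3, L(K) ≥ B(K); i.e., the number of all tree hierarchies dominates the number of binary hierarchies. -/
import Mathlib

section Aux

variable (B : ℕ → ℕ)

/-- lemX: the shifted convolution, given the base convolution identity at n. -/
lemma lemX (hB1 : B 1 = 1) (hB2 : B 2 = 1)
    (hBrec : ∀ K : ℕ, 2 ≤ K → B (K + 1) = (2 * K - 1) * B K)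
    (n : ℕ) (hn : 2 ≤ n)
    (hSn : ∑ m ∈ Finset.range (n-1), n.choose (m+1) * B (m+1) * B (n-1-m) = 2 * B n) :
    ∑ m ∈ Finset.range (n-1), n.choose (m+1) * B (m+1) * B (n-m) = (2*n-2) * B n := by
  have hB' : ∀ k, 1 ≤ k → B (k+1) = (2*k-1) * B k := by
    intro k hk
    rcases Nat.lt_or_ge k 2 with h | h
    · interval_cases k
      · simpa [hB1] using hB2
    · exact hBrec k h
  set t : ℕ → ℕ := fun m => n.choose (m+1) * B (m+1) * B (n-1-m) with ht
  have hstep : ∑ m ∈ Finset.range (n-1), n.choose (m+1) * B (m+1) * B (n-m)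
      = ∑ m ∈ Finset.range (n-1), (2*(n-2-m)+1) * t m := by
    refine Finset.sum_congr rfl ?_
    intro m hm
    have hm' : m < n - 1 := Finset.mem_range.mp hm
    have h1 : n - m = (n-1-m) + 1 := by omega
    have h2 : B ((n-1-m)+1) = (2*(n-1-m)-1) * B (n-1-m) := hB' _ (by omega)
    have h3 : 2*(n-1-m)-1 = 2*(n-2-m)+1 := by omega
    rw [h1, h2, h3, ht]; ring
  have hsym : ∀ m ∈ Finset.range (n-1), t (n-2-m) = t m := by
    intro m hm
    have hm' : m < n - 1 := Finset.mem_range.mp hm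
    have e1 : (n-2-m)+1 = n-1-m := by omega
    have e2 : n-1-(n-2-m) = m+1 := by omega
    have e3 : n.choose (n-1-m) = n.choose (m+1) := by
      have := Nat.choose_symm (n := n) (k := m+1) (by omega)
      have e4 : n - (m+1) = n-1-m := by omega
      rw [e4] at this; exact this
    simp only [ht, e1, e2, e3]; ring
  have hrefl : ∑ m ∈ Finset.range (n-1), (2*(n-2-m)+1) * t m
      = ∑ m ∈ Finset.range (n-1), (2*m+1) * t m := by
    have := Finset.sum_range_reflect (fun m => (2*(n-2-m)+1) * t m) (n-1)
    rw [← this]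
    refine Finset.sum_congr rfl ?_
    intro m hm
    have hm' : m < n - 1 := Finset.mem_range.mp hm
    have e0 : n - 1 - 1 - m = n - 2 - m := by omega
    have e1 : n-2-(n-2-m) = m := by omega
    rw [e0, hsym m hm, e1]
  have hdouble : 2 * ∑ m ∈ Finset.range (n-1), n.choose (m+1) * B (m+1) * B (n-m)
      = (2*n-2) * ∑ m ∈ Finset.range (n-1), t m := by
    have : 2 * ∑ m ∈ Finset.range (n-1), n.choose (m+1) * B (m+1) * B (n-m)
        = ∑ m ∈ Finset.range (n-1), ((2*(n-2-m)+1) * t m + (2*m+1) * t m) := by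
      rw [Finset.sum_add_distrib, ← hrefl, ← hstep]; ring
    rw [this, Finset.mul_sum]
    refine Finset.sum_congr rfl ?_
    intro m hm
    have hm' : m < n - 1 := Finset.mem_range.mp hm
    have : (2*(n-2-m)+1) + (2*m+1) = 2*n-2 := by omega
    rw [← add_mul, this]
  rw [hSn] at hdouble
  have h2 : (2*n-2) * (2*B n) = 2*((2*n-2)*B n) := by ring
  rw [h2] at hdouble
  exact Nat.eq_of_mul_eq_mul_left (by norm_num) hdouble

/-- lemA: sum up to range n of the shifted convolution. -/
lemma lemA (hB1 : B 1 = 1) (hB2 : B 2 = 1)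
    (hBrec : ∀ K : ℕ, 2 ≤ K → B (K + 1) = (2 * K - 1) * B K)
    (n : ℕ) (hn : 2 ≤ n)
    (hSn : ∑ m ∈ Finset.range (n-1), n.choose (m+1) * B (m+1) * B (n-1-m) = 2 * B n) :
    ∑ m ∈ Finset.range n, n.choose (m+1) * B (m+1) * B (n-m) = (2*n-1) * B n := by
  have hX := lemX B hB1 hB2 hBrec n hn hSn
  have hn' : n = (n-1) + 1 := by omega
  rw [hn', Finset.sum_range_succ, ← hn']
  have e1 : (n-1)+1 = n := by omega
  have e2 : n - (n-1) = 1 := by omega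
  rw [hX, e2, Nat.choose_self, hB1]
  have e3 : 2*n-1 = (2*n-2)+1 := by omega
  rw [e3]; ring

/-- lemA': the other Pascal half equals lemA by reflection. -/
lemma lemA' (hB1 : B 1 = 1) (hB2 : B 2 = 1)
    (hBrec : ∀ K : ℕ, 2 ≤ K → B (K + 1) = (2 * K - 1) * B K)
    (n : ℕ) (hn : 2 ≤ n)
    (hSn : ∑ m ∈ Finset.range (n-1), n.choose (m+1) * B (m+1) * B (n-1-m) = 2 * B n) :
    ∑ m ∈ Finset.range n, n.choose m * B (m+1) * B (n-m) = (2*n-1) * B n := by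
  rw [← lemA B hB1 hB2 hBrec n hn hSn]
  rw [← Finset.sum_range_reflect (fun m => n.choose m * B (m+1) * B (n-m)) n]
  refine Finset.sum_congr rfl ?_
  intro m hm
  have hm' : m < n := Finset.mem_range.mp hm
  have e1 : n - (n-1-m) = m+1 := by omega
  have e2 : (n-1-m)+1 = n-m := by omega
  have e3 : n.choose (n-1-m) = n.choose (m+1) := by
    have := Nat.choose_symm (n := n) (k := m+1) (by omega)
    have e4 : n - (m+1) = n-1-m := by omega
    rw [e4] at this; exact this
  simp only [e1, e2, e3]; ring

/-- The key convolution identity for B. -/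
lemma keyS (hB1 : B 1 = 1) (hB2 : B 2 = 1)
    (hBrec : ∀ K : ℕ, 2 ≤ K → B (K + 1) = (2 * K - 1) * B K) :
    ∀ n : ℕ, 2 ≤ n →
      ∑ m ∈ Finset.range (n-1), n.choose (m+1) * B (m+1) * B (n-1-m) = 2 * B n := by
  intro n hn
  induction n, hn using Nat.le_induction with
  | base => simp [Finset.sum_range_one, hB1, hB2]
  | succ n hn ih =>
    have hA := lemA B hB1 hB2 hBrec n hn ih
    have hA' := lemA' B hB1 hB2 hBrec n hn ih
    have e0 : n + 1 - 1 = n := by omega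
    rw [e0]
    have hsplit : ∑ m ∈ Finset.range n, (n+1).choose (m+1) * B (m+1) * B (n-m)
        = (∑ m ∈ Finset.range n, n.choose m * B (m+1) * B (n-m))
          + ∑ m ∈ Finset.range n, n.choose (m+1) * B (m+1) * B (n-m) := by
      rw [← Finset.sum_add_distrib]
      refine Finset.sum_congr rfl ?_
      intro m hm
      rw [Nat.choose_succ_succ]
      ring
    rw [hsplit, hA, hA']
    have hB' : B (n+1) = (2*n-1) * B n := hBrec n hn
    rw [hB']
    ring

/-- The paper sum T(K) equals (K-1) B(K). -/
lemma lemT (hB1 : B 1 = 1) (hB2 : B 2 = 1)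
    (hBrec : ∀ K : ℕ, 2 ≤ K → B (K + 1) = (2 * K - 1) * B K)
    (K : ℕ) (hK : 2 ≤ K) :
    ∑ i ∈ Finset.range (K-1), K.choose i * B (i+1) * B (K-i) = (K-1) * B K := by
  have hA' := lemA' B hB1 hB2 hBrec K hK (keyS B hB1 hB2 hBrec K hK)
  have hK' : K = (K-1) + 1 := by omega
  rw [hK', Finset.sum_range_succ, ← hK'] at hA'
  have e1 : (K-1)+1 = K := by omega
  have e2 : K - (K-1) = 1 := by omega
  have e4 : K.choose (K-1) = K := by
    have h := Nat.choose_symm (show 1 ≤ K by omega)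
    simpa [Nat.choose_one_right] using h
  rw [e2, hB1, e4, mul_one] at hA'
  -- hA' : T + K * B K * 1 = (2K-1) * B K
  have e3 : (2*K-1) * B K = (K-1) * B K + K * B K := by
    have : 2*K-1 = (K-1) + K := by omega
    rw [this, add_mul]
  rw [e3] at hA'
  linarith
end Aux


theorem L_dominates_binary (L B : ℕ → ℕ) (h1 : L 1 = 1)
    (hrec : ∀ K : ℕ, 1 ≤ K → L (K + 1) =
      K.choose (K - 1) * L K +
        2 * ∑ i ∈ Finset.range (K - 1), K.choose i * L (i + 1) * L (K - i))
    (hB1 : B 1 = 1) (hB2 : B 2 = 1)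
    (hBrec : ∀ K : ℕ, 2 ≤ K → B (K + 1) = (2 * K - 1) * B K) :
    ∀ K : ℕ, 3 ≤ K → B K ≤ L K := by
  have hL2 : L 2 = 1 := by
    have h := hrec 1 le_rfl
    simpa [h1] using h
  have main : ∀ K : ℕ, 1 ≤ K → B K ≤ L K := by
    intro K
    induction K using Nat.strong_induction_on with
    | _ K ih =>
      intro hK
      rcases Nat.lt_or_ge K 3 with h | h
      · interval_cases K
        · simp [hB1, h1]
        · simp [hB2, hL2]
      · obtain ⟨n, rfl⟩ : ∃ n, K = n + 1 := ⟨K - 1, by omega⟩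
        have hn : 2 ≤ n := by omega
        rw [hrec n (by omega), hBrec n hn]
        have hch : n.choose (n-1) = n := by
          have hh := Nat.choose_symm (show 1 ≤ n by omega)
          simpa [Nat.choose_one_right] using hh
        have hsum : ∑ i ∈ Finset.range (n-1), n.choose i * B (i+1) * B (n-i)
            ≤ ∑ i ∈ Finset.range (n-1), n.choose i * L (i+1) * L (n-i) := by
          refine Finset.sum_le_sum ?_
          intro i hi
          have hi' : i < n - 1 := Finset.mem_range.mp hi
          have hb1 : B (i+1) ≤ L (i+1) := ih (i+1) (by omega) (by omega)
          have hb2 : B (n-i) ≤ L (n-i) := ih (n-i) (by omega) (by omega)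
          exact Nat.mul_le_mul (Nat.mul_le_mul_left _ hb1) hb2
        have hT := lemT B hB1 hB2 hBrec n hn
        have hLn : n * B n ≤ n.choose (n-1) * L n := by
          rw [hch]
          exact Nat.mul_le_mul_left _ (ih n (by omega) (by omega))
        calc (2*n-1) * B n ≤ (n + 2*(n-1)) * B n := by
              exact Nat.mul_le_mul_right _ (by omega)
          _ = n * B n + 2 * ((n-1) * B n) := by ring
          _ = n * B n + 2 * ∑ i ∈ Finset.range (n-1), n.choose i * B (i+1) * B (n-i) := by
              rw [hT]
          _ ≤ n.choose (n-1) * L n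
              + 2 * ∑ i ∈ Finset.range (n-1), n.choose i * L (i+1) * L (n-i) := by
              exact Nat.add_le_add hLn (Nat.mul_le_mul_left _ hsum)
  intro K hK
  exact main K (by omega)
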